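/- Let Ω be the set of triplets (x, y, z) with x ≤ y ≤ z in [−π/3, π/3) such that 2x − y + 3z ≥ 0 and (π/(3√3)) (2 tan x − tan y + 3 tan z) ≥ 2x − y + 3z. Then the maximum over Ω of tan((2x − y + 3z)/4) − (2 tan x − tan y + 3 tan z)/4 equals 0; in particular the expression is ≤ 0 on Ω and equals 0 at (x, y, z) = (0, 0, 0) ∈ Ω. -/

import Mathlib

open Real

lemma convexOn_tan_Ico : ConvexOn ℝ (Set.Ico 0 (π / 2)) tan := by
  have hcos : ∀ y ∈ Set.Ico (0:ℝ) (π / 2), 0 < cos y := fun y hy =>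
    Real.cos_pos_of_mem_Ioo ⟨lt_of_lt_of_le (by linarith [Real.pi_pos]) hy.1, hy.2⟩
  have hint : interior (Set.Ico (0:ℝ) (π / 2)) = Set.Ioo 0 (π / 2) := interior_Ico
  refine MonotoneOn.convexOn_of_deriv (convex_Ico _ _) ?_ ?_ ?_
  · exact Real.continuousOn_tan.mono fun y hy => (hcos y hy).ne'
  · rw [hint]
    intro y hy
    exact (Real.hasDerivAt_tan (hcos y (Set.Ioo_subset_Ico_self hy)).ne').differentiableAt.differentiableWithinAt
  · rw [hint]
    intro a ha b hb hab
    rw [Real.deriv_tan, Real.deriv_tan]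
    have hca := hcos a (Set.Ioo_subset_Ico_self ha)
    have hcb := hcos b (Set.Ioo_subset_Ico_self hb)
    have : cos b ≤ cos a := by
      apply Real.cos_le_cos_of_nonneg_of_le_pi ha.1.le (le_trans hb.2.le (by linarith [Real.pi_pos])) hab
    apply div_le_div_of_nonneg_left one_pos.le (by positivity)
    exact pow_le_pow_left₀ hcb.le this 2

/-- Chord inequality: on `[0, π/3]`, `tan t ≤ (3√3/π) t`. -/
lemma tan_le_chord {t : ℝ} (h0 : 0 ≤ t) (h1 : t ≤ π / 3) :
    tan t ≤ 3 * Real.sqrt 3 / π * t := by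
  have hpi := Real.pi_pos
  have h3 : (π / 3 : ℝ) ∈ Set.Ico (0:ℝ) (π / 2) := ⟨by positivity, by linarith⟩
  have h0' : (0 : ℝ) ∈ Set.Ico (0:ℝ) (π / 2) := ⟨le_refl _, by positivity⟩
  set b : ℝ := 3 / π * t with hb
  have hb0 : 0 ≤ b := by positivity
  have hb1 : b ≤ 1 := by
    rw [hb]; rw [div_mul_eq_mul_div, div_le_one hpi]; linarith
  have key := convexOn_tan_Ico.2 h0' h3 (by linarith : (0:ℝ) ≤ 1 - b) hb0 (by ring)
  have ht : (1 - b) • (0:ℝ) + b • (π / 3) = t := by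
    simp only [smul_eq_mul, mul_zero, zero_add, hb]
    field_simp
  rw [ht] at key
  simp only [smul_eq_mul, Real.tan_zero, mul_zero, zero_add] at key
  rw [Real.tan_pi_div_three] at key
  calc tan t ≤ b * Real.sqrt 3 := key
    _ = 3 * Real.sqrt 3 / π * t := by rw [hb]; ring

/-- The constrained optimization problem illustrating Theorem 3: the maximum of
`tan((2x − y + 3z)/4) − (2 tan x − tan y + 3 tan z)/4` over the set `Ω` of
triplets `x ≤ y ≤ z` in `[−π/3, π/3)` with `2x − y + 3z ≥ 0` and
`(π/(3√3))(2 tan x − tan y + 3 tan z) ≥ 2x − y + 3z` equals `0` (attained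
at `(0, 0, 0) ∈ Ω`). -/
theorem tan_weighted_jensen_max :
    IsGreatest
      {v : ℝ | ∃ x y z : ℝ, x ≤ y ∧ y ≤ z ∧
        x ∈ Set.Ico (-(π / 3)) (π / 3) ∧
        y ∈ Set.Ico (-(π / 3)) (π / 3) ∧
        z ∈ Set.Ico (-(π / 3)) (π / 3) ∧
        0 ≤ 2 * x - y + 3 * z ∧
        2 * x - y + 3 * z ≤
          π / (3 * Real.sqrt 3) * (2 * tan x - tan y + 3 * tan z) ∧
        v = tan ((2 * x - y + 3 * z) / 4) -
          (2 * tan x - tan y + 3 * tan z) / 4}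
      0 := by
  have hpi := Real.pi_pos
  constructor
  · refine ⟨0, 0, 0, le_refl _, le_refl _, ?_, ?_, ?_, by norm_num, by norm_num, by norm_num⟩ <;>
      exact ⟨by linarith, by linarith⟩
  · rintro v ⟨x, y, z, hxy, hyz, hx, hy, hz, hs0, hsT, rfl⟩
    set s := 2 * x - y + 3 * z with hs
    set T := 2 * tan x - tan y + 3 * tan z with hT
    have hs4 : s / 4 ≤ π / 3 := by
      have : s ≤ 4 * z := by rw [hs]; linarith
      have := hz.2
      linarith
    have h04 : 0 ≤ s / 4 := by linarith
    have hchord := tan_le_chord h04 hs4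
    -- from s ≤ (π/(3√3)) T deduce (3√3/π) s ≤ T
    have hsqrt3 : (0:ℝ) < Real.sqrt 3 := Real.sqrt_pos.mpr (by norm_num)
    have hTs : 3 * Real.sqrt 3 / π * s ≤ T := by
      have h := mul_le_mul_of_nonneg_left hsT
        (le_of_lt (by positivity : (0:ℝ) < 3 * Real.sqrt 3 / π))
      have heq : 3 * Real.sqrt 3 / π * (π / (3 * Real.sqrt 3) * T) = T := by
        field_simp
      rw [heq] at h
      exact h
    have : tan (s / 4) ≤ T / 4 := by
      calc tan (s / 4) ≤ 3 * Real.sqrt 3 / π * (s / 4) := hchord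
        _ = (3 * Real.sqrt 3 / π * s) / 4 := by ring
        _ ≤ T / 4 := by linarith
    linarith
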